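/- A nonnegative circuit polynomial f(x) = Σ_{j=0}^r c_j x^{α(j)} + c_β x^β with c_β = −Θ_f, β ∈ (2ℕ)^n, and Newton polytope equal to the full simplex Δ_{n,2d} with vertices 0, 2d·e_1, …, 2d·e_n, has exactly 2^n zeros in (ℝ∖{0})^n, namely all points v with |v_i| = (λ_i/c_i)^{1/(2d)} for i = 1,…,n. -/

import Mathlib

open Finset in
lemma amgm_eq_one {n : ℕ} (w0 : ℝ) (w t : Fin n → ℝ) (hw0 : 0 < w0) (hw : ∀ i, 0 < w i)
    (hsum : w0 + ∑ i, w i = 1) (ht : ∀ i, 0 < t i)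
    (heq : w0 + ∑ i, w i * t i = ∏ i, t i ^ (w i)) : ∀ i, t i = 1 := by
  set p : Option (Fin n) → ℝ := fun o => o.elim 1 t with hp
  set W : Option (Fin n) → ℝ := fun o => o.elim w0 w with hW
  have h₀ : ∀ o ∈ (univ : Finset (Option (Fin n))), 0 < W o := by
    rintro (_ | i) _ <;> simp [hW, hw0, hw]
  have h₁ : ∑ o, W o = 1 := by
    rw [Fintype.sum_option]; simpa [hW] using hsum
  have hmem : ∀ o ∈ (univ : Finset (Option (Fin n))), p o ∈ Set.Ioi (0:ℝ) := by
    rintro (_ | i) _ <;> simp [hp, ht]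
  have hsmul : ∑ o, W o • p o = w0 + ∑ i, w i * t i := by
    rw [Fintype.sum_option]; simp [hW, hp, smul_eq_mul]
  have hlog : Real.log (∑ o, W o • p o) = ∑ o, W o • Real.log (p o) := by
    rw [hsmul, heq, Real.log_prod (fun i _ => (Real.rpow_pos_of_pos (ht i) _).ne'),
      Fintype.sum_option]
    simp [hW, hp, Real.log_rpow (ht _), smul_eq_mul]
  have key := strictConcaveOn_log_Ioi.eq_of_map_sum_eq h₀ h₁ hmem (le_of_eq hlog)
  intro i
  have := key (Finset.mem_univ (some i)) (Finset.mem_univ none)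
  simpa [hp] using this

/-- A nonnegative circuit polynomial with full simplex Newton polytope
`Δ_{n,2d}` and inner coefficient `−Θ_f` at an even interior exponent has exactly the
`2^n` zeros `v` with `|v_i| = (λ_i/c_i)^{1/(2d)}` in `(ℝ∖{0})^n`. -/
theorem circuit_polynomial_zero_set
    (n d : ℕ) (hn : 1 ≤ n) (hd : 1 ≤ d)
    (lam0 : ℝ) (lam c : Fin n → ℝ)
    (hlam0 : 0 < lam0) (hlam : ∀ i, 0 < lam i) (hc : ∀ i, 0 < c i)
    (hsum : lam0 + ∑ i, lam i = 1)
    (β : Fin n → ℕ)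
    (hβeven : ∀ i, Even (β i)) (hβne : ∀ i, β i ≠ 0)
    (hβ : ∀ i, (β i : ℝ) = 2 * d * lam i)
    (Θ : ℝ) (hΘ : Θ = ∏ i, (c i / lam i) ^ (lam i))
    (f : (Fin n → ℝ) → ℝ)
    (hf : ∀ x, f x = lam0 + (∑ i, c i * x i ^ (2 * d)) + (-Θ) * ∏ i, x i ^ (β i))
    (hnonneg : ∀ x, 0 ≤ f x) :
    {x : Fin n → ℝ | (∀ i, x i ≠ 0) ∧ f x = 0}
        = {v : Fin n → ℝ | ∀ i, |v i| = (lam i / c i) ^ ((1 : ℝ) / (2 * d))} ∧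
    Set.ncard {x : Fin n → ℝ | (∀ i, x i ≠ 0) ∧ f x = 0} = 2 ^ n := by
  have hd2 : (0:ℝ) < 2 * d := by positivity
  set r : Fin n → ℝ := fun i => (lam i / c i) ^ ((1 : ℝ) / (2 * d)) with hr
  have hrdef : ∀ i, r i = (lam i / c i) ^ ((1 : ℝ) / (2 * d)) := fun i => rfl
  have hrpos : ∀ i, 0 < r i := fun i => Real.rpow_pos_of_pos (div_pos (hlam i) (hc i)) _
  have habs : ∀ (a : ℝ) (i : Fin n), a ^ β i = |a| ^ β i :=
    fun a i => ((hβeven i).pow_abs a).symm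
  have habs2 : ∀ a : ℝ, a ^ (2 * d) = |a| ^ (2 * d) :=
    fun a => ((even_two_mul d).pow_abs a).symm
  have hexp1 : ((2 * d : ℕ) : ℝ) * ((1:ℝ)/(2*d)) = 1 := by
    push_cast; field_simp
  have hexp2 : ((1:ℝ)/(2*d)) * ((2 * d : ℕ) : ℝ) = 1 := by
    push_cast; field_simp
  have hset : {x : Fin n → ℝ | (∀ i, x i ≠ 0) ∧ f x = 0}
      = {v : Fin n → ℝ | ∀ i, |v i| = r i} := by
    ext x
    simp only [Set.mem_setOf_eq]
    constructor
    · rintro ⟨hx0, hfx⟩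
      set t : Fin n → ℝ := fun i => c i * x i ^ (2 * d) / lam i with htdef
      have htd : ∀ i, t i = c i * x i ^ (2 * d) / lam i := fun i => rfl
      have hxpow : ∀ i, 0 < x i ^ (2 * d) := by
        intro i
        rw [habs2]
        exact pow_pos (abs_pos.mpr (hx0 i)) _
      have ht : ∀ i, 0 < t i := fun i => by
        have := hxpow i; have := hc i; have := hlam i
        rw [htd]; positivity
      have hprod : ∏ i, t i ^ (lam i) = Θ * ∏ i, x i ^ (β i) := by
        rw [hΘ, ← Finset.prod_mul_distrib]
        refine Finset.prod_congr rfl fun i _ => ?_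
        have h1 : t i = (c i / lam i) * |x i| ^ (2 * d) := by
          rw [htd, habs2 (x i)]; ring
        rw [h1, Real.mul_rpow (div_pos (hc i) (hlam i)).le (pow_nonneg (abs_nonneg _) _)]
        congr 1
        rw [habs (x i) i, ← Real.rpow_natCast |x i| (2 * d), ← Real.rpow_natCast |x i| (β i),
          ← Real.rpow_mul (abs_nonneg _)]
        congr 1
        rw [hβ i]; push_cast; ring
      have hsum2 : ∑ i, c i * x i ^ (2 * d) = ∑ i, lam i * t i := by
        refine Finset.sum_congr rfl fun i _ => ?_
        rw [htd, mul_div_assoc', mul_comm (lam i), mul_div_assoc,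
          div_self (hlam i).ne', mul_one]
      have hfx0 := hf x
      rw [hfx, neg_mul] at hfx0
      have heq : lam0 + ∑ i, lam i * t i = ∏ i, t i ^ (lam i) := by
        rw [hprod, ← hsum2]; linarith [hfx0]
      have hone := amgm_eq_one lam0 lam t hlam0 hlam hsum ht heq
      intro i
      have hx2d : |x i| ^ (2 * d) = lam i / c i := by
        have h := hone i
        rw [htd, div_eq_one_iff_eq (hlam i).ne'] at h
        rw [← habs2, eq_div_iff (hc i).ne']
        linarith [h]
      rw [hrdef i, ← hx2d, ← Real.rpow_natCast |x i| (2 * d),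
        ← Real.rpow_mul (abs_nonneg _), hexp1, Real.rpow_one]
    · intro hv
      have hx2d : ∀ i, x i ^ (2 * d) = lam i / c i := by
        intro i
        rw [habs2, hv i, hrdef i, ← Real.rpow_natCast _ (2*d),
          ← Real.rpow_mul (div_pos (hlam i) (hc i)).le, hexp2, Real.rpow_one]
      have hx0 : ∀ i, x i ≠ 0 := by
        intro i h
        have h2 := hx2d i
        rw [h, zero_pow (by positivity)] at h2
        exact absurd h2.symm (div_pos (hlam i) (hc i)).ne'
      refine ⟨hx0, ?_⟩
      have h1 : ∑ i, c i * x i ^ (2 * d) = ∑ i, lam i := by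
        refine Finset.sum_congr rfl fun i _ => ?_
        rw [hx2d i, mul_div_assoc', mul_comm, mul_div_assoc, div_self (hc i).ne', mul_one]
      have h2 : Θ * ∏ i, x i ^ (β i) = 1 := by
        rw [hΘ, ← Finset.prod_mul_distrib]
        rw [show (1:ℝ) = ∏ _i : Fin n, 1 by simp]
        refine Finset.prod_congr rfl fun i _ => ?_
        rw [habs, hv i, hrdef i, ← Real.rpow_natCast _ (β i),
          ← Real.rpow_mul (div_pos (hlam i) (hc i)).le,
          show (1:ℝ)/(2*d) * (β i : ℝ) = lam i by rw [hβ i]; field_simp,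
          ← Real.mul_rpow (div_pos (hc i) (hlam i)).le (div_pos (hlam i) (hc i)).le,
          show c i / lam i * (lam i / c i) = 1 by
            field_simp [mul_comm]; exact div_self (mul_pos (hc i) (hlam i)).ne',
          Real.one_rpow]
      rw [hf x, h1, neg_mul]
      linarith [h2, hsum]
  constructor
  · rw [hset]
  · rw [hset]
    have hinj : Function.Injective
        (fun b : Fin n → Bool => fun i => if b i then r i else -(r i)) := by
      intro b b' h
      funext i
      have hcf := congrFun h i
      cases hb : b i <;> cases hb' : b' i <;> simp [hb, hb'] at hcf ⊢ <;>
        linarith [hrpos i]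
    have himg : {v : Fin n → ℝ | ∀ i, |v i| = r i}
        = (fun b : Fin n → Bool => fun i => if b i then r i else -(r i)) '' Set.univ := by
      ext v
      simp only [Set.mem_setOf_eq, Set.image_univ, Set.mem_range]
      constructor
      · intro hv
        refine ⟨fun i => decide (v i = r i), ?_⟩
        funext i
        rcases (abs_eq (hrpos i).le).mp (hv i) with h | h
        · simp [h]
        · have hne : v i ≠ r i := by
            rw [h]; intro hc2; have := hrpos i; linarith
          have hdec : decide (v i = r i) = false := by simp [hne]
          simp only [hdec, if_false, Bool.false_eq_true]
          rw [h]
      · rintro ⟨b, rfl⟩ i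
        cases hb : b i <;> simp [hb, abs_neg, abs_of_pos (hrpos i)]
    rw [himg, Set.ncard_image_of_injective _ hinj, Set.ncard_univ]
    simp [Nat.card_eq_fintype_card]
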